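/- Let X be a random variable with P(|X| > t) = e^{ep+1} / (t^p (ln t)(ln ln t)^α) for t ≥ e^e (and appropriately defined for t < e^e), where 1 < p < 2 and α > 1. Then E[|X|^p] < ∞ but ∫_0^∞ P(|X| > t)^{1/p} dt = ∞. -/

import Mathlib

open MeasureTheory
open scoped ENNReal

open Set Filter Topology in
private lemma stmt16_facts {x : ℝ} (hx : Real.exp (Real.exp 1) ≤ x) :
    0 < x ∧ 1 < Real.log x ∧ 1 ≤ Real.log (Real.log x) := by
  have ha : (1:ℝ) < Real.exp (Real.exp 1) := Real.one_lt_exp_iff.mpr (Real.exp_pos 1)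
  have hx0 : 0 < x := lt_of_lt_of_le (by linarith) hx
  have hlx : Real.exp 1 ≤ Real.log x := by
    have := Real.log_le_log (by positivity) hx
    rwa [Real.log_exp] at this
  have he1 : (1:ℝ) < Real.exp 1 := Real.one_lt_exp_iff.mpr one_pos
  refine ⟨hx0, lt_of_lt_of_le he1 hlx, ?_⟩
  have := Real.log_le_log (Real.exp_pos 1) hlx
  rwa [Real.log_exp] at this

open Set Filter Topology in
private lemma stmt16_integrable {C α : ℝ} (hC : 0 < C) (hα : 1 < α) :
    IntegrableOn (fun t => C / (t * Real.log t * Real.log (Real.log t) ^ α))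
      (Set.Ioi (Real.exp (Real.exp 1))) := by
  set a := Real.exp (Real.exp 1) with ha
  have hderiv : ∀ x ∈ Set.Ici a, HasDerivAt
      (fun x => -C / (α - 1) * Real.log (Real.log x) ^ (1 - α))
      (C / (x * Real.log x * Real.log (Real.log x) ^ α)) x := by
    intro x hx
    obtain ⟨hx0, hlx, hllx⟩ := stmt16_facts hx
    have hlx0 : 0 < Real.log x := by linarith
    have hllx0 : 0 < Real.log (Real.log x) := by linarith
    have h1 : HasDerivAt Real.log x⁻¹ x := Real.hasDerivAt_log hx0.ne'
    have h2 : HasDerivAt (fun x => Real.log (Real.log x)) ((Real.log x)⁻¹ * x⁻¹) x :=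
      (Real.hasDerivAt_log hlx0.ne').comp x h1
    have h3 := h2.rpow_const (p := 1 - α) (Or.inl hllx0.ne')
    have h4 := h3.const_mul (-C / (α - 1))
    convert h4 using 1
    · rfl
    · rfl
    have e1 : 1 - α - 1 = -α := by ring
    rw [e1, Real.rpow_neg hllx0.le]
    have h5 : Real.log (Real.log x) ^ α ≠ 0 := (Real.rpow_pos_of_pos hllx0 α).ne'
    have h6 : α - 1 ≠ 0 := by intro h; linarith [sub_eq_zero.mp h]
    field_simp
    ring
  have g'pos : ∀ x ∈ Set.Ioi a, 0 ≤ C / (x * Real.log x * Real.log (Real.log x) ^ α) := by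
    intro x hx
    obtain ⟨hx0, hlx, hllx⟩ := stmt16_facts (le_of_lt hx)
    have hllx0 : 0 < Real.log (Real.log x) := by linarith
    exact le_of_lt (div_pos hC (mul_pos (mul_pos hx0 (by linarith))
      (Real.rpow_pos_of_pos hllx0 α)))
  have htends : Tendsto (fun x => -C / (α - 1) * Real.log (Real.log x) ^ (1 - α)) atTop
      (𝓝 (-C / (α - 1) * 0)) := by
    apply Tendsto.const_mul
    have h5 : Tendsto (fun x : ℝ => Real.log (Real.log x)) atTop atTop :=
      Real.tendsto_log_atTop.comp Real.tendsto_log_atTop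
    have h6 : Tendsto (fun y : ℝ => y ^ (1 - α)) atTop (𝓝 0) := by
      have := tendsto_rpow_neg_atTop (y := α - 1) (by linarith)
      simpa [show -(α - 1) = 1 - α by ring] using this
    exact h6.comp h5
  exact integrableOn_Ioi_deriv_of_nonneg' hderiv g'pos htends

open Set Filter Topology in
private lemma stmt16_diverge {K β B : ℝ} (hK : 0 < K) (hβ : β < 1) (hB : 1 < B) :
    ∫⁻ t in Set.Ioi B, ENNReal.ofReal (K / (t * Real.log t ^ β)) = ∞ := by
  set m : ℝ → ℝ := fun t => K / (t * Real.log t ^ β) with hm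
  set G : ℝ → ℝ := fun y => K / (1 - β) * Real.log y ^ (1 - β) with hG
  have hβ0 : 0 < 1 - β := by linarith
  have hfacts : ∀ y : ℝ, B ≤ y → 0 < y ∧ 0 < Real.log y := fun y hy =>
    ⟨by linarith, Real.log_pos (by linarith)⟩
  have hderiv : ∀ y : ℝ, B ≤ y → HasDerivAt G (m y) y := by
    intro y hy
    obtain ⟨hy0, hly⟩ := hfacts y hy
    have h1 : HasDerivAt Real.log y⁻¹ y := Real.hasDerivAt_log hy0.ne'
    have h3 := h1.rpow_const (p := 1 - β) (Or.inl hly.ne')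
    have h4 := h3.const_mul (K / (1 - β))
    convert h4 using 1
    · rfl
    · rfl
    have e1 : 1 - β - 1 = -β := by ring
    rw [hm]
    simp only []
    rw [e1, Real.rpow_neg hly.le]
    have h5 : Real.log y ^ β ≠ 0 := (Real.rpow_pos_of_pos hly β).ne'
    field_simp
  have hGtop : Tendsto G atTop atTop := by
    apply Tendsto.const_mul_atTop (by positivity : (0:ℝ) < K / (1 - β))
    exact (tendsto_rpow_atTop hβ0).comp Real.tendsto_log_atTop
  have key : ∀ x : ℝ, B ≤ x →
      ENNReal.ofReal (G x - G B) ≤ ∫⁻ t in Set.Ioi B, ENNReal.ofReal (m t) := by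
    intro x hx
    have hcont : ContinuousOn m (Set.uIcc B x) := by
      rw [Set.uIcc_of_le hx]
      apply ContinuousOn.div continuousOn_const
      · apply ContinuousOn.mul continuousOn_id
        apply ContinuousOn.rpow_const
        · exact Real.continuousOn_log.mono (fun y hy => (hfacts y hy.1).1.ne')
        · exact fun y hy => Or.inl (hfacts y hy.1).2.ne'
      · intro y hy
        obtain ⟨hy0, hly⟩ := hfacts y hy.1
        exact (mul_pos hy0 (Real.rpow_pos_of_pos hly β)).ne'
    have hint : IntervalIntegrable m volume B x := hcont.intervalIntegrable
    have heq : ∫ t in B..x, m t = G x - G B := by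
      apply intervalIntegral.integral_eq_sub_of_hasDerivAt _ hint
      intro y hy
      rw [Set.uIcc_of_le hx] at hy
      exact hderiv y hy.1
    calc ENNReal.ofReal (G x - G B) = ∫⁻ t in Set.Ioc B x, ENNReal.ofReal (m t) := by
          rw [← heq, intervalIntegral.integral_of_le hx, ofReal_integral_eq_lintegral_ofReal]
          · exact (intervalIntegrable_iff_integrableOn_Ioc_of_le hx).1 hint
          · filter_upwards [ae_restrict_mem measurableSet_Ioc] with y hy
            obtain ⟨hy0, hly⟩ := hfacts y hy.1.le
            exact le_of_lt (div_pos hK (mul_pos hy0 (Real.rpow_pos_of_pos hly β)))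
      _ ≤ _ := lintegral_mono_set Set.Ioc_subset_Ioi_self
  apply ENNReal.eq_top_of_forall_nnreal_le
  intro r
  obtain ⟨x, hx1, hx2⟩ :=
    ((hGtop.eventually_ge_atTop (G B + r)).and (eventually_ge_atTop B)).exists
  calc (r : ℝ≥0∞) = ENNReal.ofReal r := (ENNReal.ofReal_coe_nnreal).symm
    _ ≤ ENNReal.ofReal (G x - G B) := ENNReal.ofReal_le_ofReal (by linarith)
    _ ≤ _ := key x hx2

open Set Filter Topology in
/-- If `P(|X| > t) = e^{ep+1} / (t^p (ln t)(ln ln t)^α)` for `t ≥ e^e`, with `1 < p < 2`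
and `α > 1`, then `E|X|^p < ∞` but `∫_0^∞ P(|X| > t)^{1/p} dt = ∞`. -/
theorem stmt_16 {Ω : Type*} [MeasureSpace Ω] [IsProbabilityMeasure (volume : Measure Ω)]
    (p α : ℝ) (hp : 1 < p) (hp2 : p < 2) (hα : 1 < α)
    (X : Ω → ℝ) (hXmeas : Measurable X)
    (htail : ∀ t : ℝ, Real.exp (Real.exp 1) ≤ t →
      (volume {ω | t < |X ω|}).toReal =
        Real.exp (Real.exp 1 * p + 1) /
          (t ^ p * Real.log t * (Real.log (Real.log t)) ^ α)) :
    (∫⁻ ω, ENNReal.ofReal (|X ω| ^ p)) < ∞ ∧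
      (∫⁻ t in Set.Ioi (0 : ℝ),
        ENNReal.ofReal ((volume {ω | t < |X ω|}).toReal ^ (1 / p))) = ∞ := by
  set a := Real.exp (Real.exp 1) with ha
  set C := Real.exp (Real.exp 1 * p + 1) with hC
  have hC0 : 0 < C := Real.exp_pos _
  have ha1 : (1:ℝ) < a := Real.one_lt_exp_iff.mpr (Real.exp_pos 1)
  have hp0 : (0:ℝ) < p := by linarith
  constructor
  · rw [lintegral_rpow_eq_lintegral_meas_lt_mul volume
      (ae_of_all _ fun ω => abs_nonneg (X ω)) hXmeas.abs.aemeasurable hp0]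
    apply ENNReal.mul_lt_top ENNReal.ofReal_lt_top
    have hsplit : (Set.Ioi (0:ℝ)) = Set.Ioc 0 a ∪ Set.Ioi a :=
      (Set.Ioc_union_Ioi_eq_Ioi (by linarith)).symm
    rw [hsplit, lintegral_union measurableSet_Ioi Set.Ioc_disjoint_Ioi_same]
    apply ENNReal.add_lt_top.mpr
    constructor
    · calc ∫⁻ t in Set.Ioc (0:ℝ) a, volume {ω | t < |X ω|} * ENNReal.ofReal (t ^ (p-1))
          ≤ ∫⁻ _ in Set.Ioc (0:ℝ) a, ENNReal.ofReal (a ^ (p-1)) := by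
            apply lintegral_mono_ae
            filter_upwards [ae_restrict_mem measurableSet_Ioc] with t ht
            calc volume {ω | t < |X ω|} * ENNReal.ofReal (t ^ (p-1))
                ≤ 1 * ENNReal.ofReal (a ^ (p-1)) :=
                  mul_le_mul' prob_le_one
                    (ENNReal.ofReal_le_ofReal (Real.rpow_le_rpow ht.1.le ht.2 (by linarith)))
              _ = _ := one_mul _
        _ < ⊤ := by
            rw [setLIntegral_const]
            exact ENNReal.mul_lt_top ENNReal.ofReal_lt_top measure_Ioc_lt_top
    · have hcongr : ∫⁻ t in Set.Ioi a, volume {ω | t < |X ω|} * ENNReal.ofReal (t ^ (p-1))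
          = ∫⁻ t in Set.Ioi a,
              ENNReal.ofReal (C / (t * Real.log t * Real.log (Real.log t) ^ α)) := by
        apply setLIntegral_congr_fun measurableSet_Ioi
        intro t ht
        obtain ⟨ht0, hlt1, hllt1⟩ := stmt16_facts (le_of_lt ht)
        have hlt0 : 0 < Real.log t := by linarith
        have hllt0 : 0 < Real.log (Real.log t) := by linarith
        have h2 : (0:ℝ) < t ^ p := Real.rpow_pos_of_pos ht0 p
        have h3 : (0:ℝ) < Real.log (Real.log t) ^ α := Real.rpow_pos_of_pos hllt0 α
        have h1 : volume {ω | t < |X ω|} = ENNReal.ofReal ((volume {ω | t < |X ω|}).toReal) :=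
          (ENNReal.ofReal_toReal (measure_ne_top _ _)).symm
        beta_reduce
        rw [h1, htail t (le_of_lt ht), ← ENNReal.ofReal_mul
          (le_of_lt (div_pos hC0 (mul_pos (mul_pos h2 hlt0) h3)))]
        congr 1
        rw [Real.rpow_sub ht0, Real.rpow_one]
        field_simp
      rw [hcongr]
      have hint := stmt16_integrable hC0 hα
      calc ∫⁻ t in Set.Ioi a, ENNReal.ofReal (C / (t * Real.log t * Real.log (Real.log t) ^ α))
          ≤ ∫⁻ t in Set.Ioi a, (‖C / (t * Real.log t * Real.log (Real.log t) ^ α)‖₊ : ℝ≥0∞) :=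
            lintegral_mono fun t => Real.ofReal_le_enorm _
        _ < ⊤ := hint.2
  · set β := (1/p + 1)/2 with hβ
    have h1p : 1/p < 1 := by rw [div_lt_one hp0]; exact hp
    have h1p0 : 0 < 1/p := by positivity
    have hβ1 : β < 1 := by rw [hβ]; linarith
    have hβp : 1/p < β := by rw [hβ]; linarith
    have hα0 : (0:ℝ) < α := by linarith
    set ε := (β - 1/p) * p / α with hε
    have hε0 : 0 < ε := div_pos (mul_pos (by linarith) hp0) hα0
    have hev : ∀ᶠ t in atTop, Real.log (Real.log t) ≤ Real.log t ^ ε := by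
      have h := (isLittleO_log_rpow_atTop hε0).def one_pos
      have h2 := Real.tendsto_log_atTop.eventually h
      filter_upwards [h2, Real.tendsto_log_atTop.eventually (eventually_ge_atTop (0:ℝ))]
        with t ht ht0
      calc Real.log (Real.log t) ≤ ‖Real.log (Real.log t)‖ := le_abs_self _
        _ ≤ 1 * ‖Real.log t ^ ε‖ := ht
        _ = Real.log t ^ ε := by
            rw [one_mul, Real.norm_eq_abs, abs_of_nonneg (Real.rpow_nonneg ht0 ε)]
    obtain ⟨b0, hb0⟩ := eventually_atTop.1 hev
    set B := max b0 a with hB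
    have hBa : a ≤ B := le_max_right _ _
    have hB1 : 1 < B := lt_of_lt_of_le ha1 hBa
    set K := C ^ (1/p) with hK
    have hK0 : 0 < K := Real.rpow_pos_of_pos hC0 _
    have hlow : ∀ t, B < t →
        K / (t * Real.log t ^ β) ≤ ((volume {ω | t < |X ω|}).toReal) ^ (1/p) := by
      intro t ht
      have hat : a ≤ t := le_trans hBa ht.le
      obtain ⟨ht0, hlt1, hllt1⟩ := stmt16_facts hat
      have hlt0 : 0 < Real.log t := by linarith
      have hllt0 : 0 < Real.log (Real.log t) := by linarith
      have htp : (0:ℝ) < t ^ p := Real.rpow_pos_of_pos ht0 p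
      have hlltα : (0:ℝ) < Real.log (Real.log t) ^ α := Real.rpow_pos_of_pos hllt0 α
      rw [htail t hat]
      have d1 : (t ^ p) ^ (1/p) = t := by
        rw [← Real.rpow_mul ht0.le, mul_one_div_cancel hp0.ne', Real.rpow_one]
      have d2 : (Real.log (Real.log t) ^ α) ^ (1/p) = Real.log (Real.log t) ^ (α/p) := by
        rw [← Real.rpow_mul hllt0.le]; congr 1; ring
      have e1 : (C / (t ^ p * Real.log t * Real.log (Real.log t) ^ α)) ^ (1/p)
          = K / (t * Real.log t ^ (1/p) * Real.log (Real.log t) ^ (α/p)) := by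
        rw [Real.div_rpow hC0.le (le_of_lt (mul_pos (mul_pos htp hlt0) hlltα)),
          Real.mul_rpow (mul_pos htp hlt0).le hlltα.le, Real.mul_rpow htp.le hlt0.le, d1, d2]
      rw [e1]
      have hM : Real.log (Real.log t) ≤ Real.log t ^ ε :=
        hb0 t (le_trans (le_max_left _ _) ht.le)
      have h2 : Real.log (Real.log t) ^ (α/p) ≤ Real.log t ^ (β - 1/p) := by
        calc Real.log (Real.log t) ^ (α/p) ≤ (Real.log t ^ ε) ^ (α/p) :=
            Real.rpow_le_rpow hllt0.le hM (by positivity)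
          _ = Real.log t ^ (β - 1/p) := by
            rw [← Real.rpow_mul hlt0.le]
            congr 1
            rw [hε]
            field_simp
      have h3 : t * Real.log t ^ (1/p) * Real.log (Real.log t) ^ (α/p)
          ≤ t * Real.log t ^ β := by
        have h4 : Real.log t ^ (1/p) * Real.log (Real.log t) ^ (α/p) ≤ Real.log t ^ β := by
          calc Real.log t ^ (1/p) * Real.log (Real.log t) ^ (α/p)
              ≤ Real.log t ^ (1/p) * Real.log t ^ (β - 1/p) :=
                mul_le_mul_of_nonneg_left h2 (Real.rpow_nonneg hlt0.le _)
            _ = Real.log t ^ β := by rw [← Real.rpow_add hlt0]; congr 1; ring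
        calc t * Real.log t ^ (1/p) * Real.log (Real.log t) ^ (α/p)
            = t * (Real.log t ^ (1/p) * Real.log (Real.log t) ^ (α/p)) := by ring
          _ ≤ t * Real.log t ^ β := mul_le_mul_of_nonneg_left h4 ht0.le
      exact div_le_div_of_nonneg_left hK0.le
        (mul_pos (mul_pos ht0 (Real.rpow_pos_of_pos hlt0 _)) (Real.rpow_pos_of_pos hllt0 _)) h3
    have hsub : ∫⁻ t in Set.Ioi B, ENNReal.ofReal (K / (t * Real.log t ^ β)) ≤
        ∫⁻ t in Set.Ioi (0:ℝ),
          ENNReal.ofReal ((volume {ω | t < |X ω|}).toReal ^ (1/p)) := by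
      calc ∫⁻ t in Set.Ioi B, ENNReal.ofReal (K / (t * Real.log t ^ β))
          ≤ ∫⁻ t in Set.Ioi B,
              ENNReal.ofReal ((volume {ω | t < |X ω|}).toReal ^ (1/p)) := by
            apply lintegral_mono_ae
            filter_upwards [ae_restrict_mem measurableSet_Ioi] with t ht
            exact ENNReal.ofReal_le_ofReal (hlow t ht)
        _ ≤ _ := lintegral_mono_set (Set.Ioi_subset_Ioi (by linarith))
    have hdiv := stmt16_diverge hK0 hβ1 hB1
    exact eq_top_iff.mpr (hdiv ▸ hsub)
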